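/- arXiv:1801.07990 — 2 statements merged into one kernel-verified Lean document; each statement's English description precedes it below -/
import Mathlib

section
/- The stabilization maps commute with the Hochschild differential: for each p ≥ 0, the embedding θ_p : C^*(A, Ω_nc^p(A)) → C^*(A, Ω_nc^{p+1}(A)) sending f to f ⊗ id_{s\bar{A}} satisfies θ_p ∘ δ = δ ∘ θ_p. -/
open TensorProduct PiTensorProduct

namespace TateHochschild

noncomputable section

variable (k A : Type) [Field k] [Ring A] [Algebra k A]

abbrev Abar : Type := A ⧸ (Submodule.span k ({(1 : A)} : Set A))
def pr : A →ₗ[k] Abar k A := (Submodule.span k ({(1 : A)} : Set A)).mkQ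
abbrev T (n : ℕ) : Type := ⨂[k] (_ : Fin n), Abar k A
abbrev Omega (n : ℕ) : Type := A ⊗[k] T k A n
def tp (n : ℕ) (v : ℕ → A) : T k A n := tprod k fun i : Fin n => pr k A (v i)
def omk (n : ℕ) (a0 : A) (v : ℕ → A) : Omega k A n := a0 ⊗ₜ tp k A n v

variable {A} in
def shiftT (v : ℕ → A) : ℕ → A := fun j => v (j + 1)
variable {A} in
def mulAt (v : ℕ → A) (i : ℕ) : ℕ → A :=
  fun j => if j < i then v j else if j = i then v i * v (i + 1) else v (j + 1)
variable {A} in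
def setAt (v : ℕ → A) (n : ℕ) (a : A) : ℕ → A := fun j => if j = n then a else v j
variable {A} in
/-- `catAt a v x w` is the tuple `v 0, …, v (a-1), x, w 0, w 1, …`. -/
def catAt (a : ℕ) (v : ℕ → A) (x : A) (w : ℕ → A) : ℕ → A :=
  fun j => if j < a then v j else if j = a then x else w (j - a - 1)

def sg (z : ℤ) : ℤ := if Even z then 1 else -1

def rGen (n : ℕ) (a0 : A) (v : ℕ → A) (a' : A) : Omega k A n :=
  sg (n : ℤ) • omk k A n (a0 * setAt v n a' 0) (shiftT (setAt v n a'))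
    + ∑ i ∈ Finset.range n, sg ((n : ℤ) + i + 1) • omk k A n a0 (mulAt (setAt v n a') i)

def IsRAct (n : ℕ) (act : Omega k A n →ₗ[k] A →ₗ[k] Omega k A n) : Prop :=
  ∀ (a0 : A) (v : ℕ → A) (a' : A), act (omk k A n a0 v) a' = rGen k A n a0 v a'

def lmul (n : ℕ) (a : A) : Omega k A n →ₗ[k] Omega k A n :=
  LinearMap.rTensor (T k A n) (LinearMap.mulLeft k a)

abbrev Bar (n : ℕ) : Type := A ⊗[k] (T k A n ⊗[k] A)
def bmk (n : ℕ) (a0 : A) (v : ℕ → A) (a' : A) : Bar k A n := a0 ⊗ₜ (tp k A n v ⊗ₜ a')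

def dGen (p : ℕ) (a0 : A) (v : ℕ → A) (a' : A) : Bar k A p :=
  bmk k A p (a0 * v 0) (shiftT v) a'
    + ∑ i ∈ Finset.range p, sg ((i : ℤ) + 1) • bmk k A p a0 (mulAt v i) a'
    + sg ((p : ℤ) + 1) • bmk k A p a0 v (v p * a')

def IsBarDiff (p : ℕ) (D : Bar k A (p + 1) →ₗ[k] Bar k A p) : Prop :=
  ∀ (a0 : A) (v : ℕ → A) (a' : A), D (bmk k A (p + 1) a0 v a') = dGen k A p a0 v a'

def castT {a b : ℕ} (h : a = b) : T k A a ≃ₗ[k] T k A b :=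
  PiTensorProduct.reindex k (fun _ => Abar k A) (finCongr h)
def castO {a b : ℕ} (h : a = b) : Omega k A a ≃ₗ[k] Omega k A b :=
  TensorProduct.congr (LinearEquiv.refl k A) (castT k A h)
def splitT (a b : ℕ) : T k A (a + b) ≃ₗ[k] T k A a ⊗[k] T k A b :=
  (PiTensorProduct.reindex k (fun _ => Abar k A) finSumFinEquiv.symm) ≪≫ₗ
    (PiTensorProduct.tmulEquiv k (Abar k A)).symm
def appOut (p q : ℕ) : Omega k A p ⊗[k] T k A q ≃ₗ[k] Omega k A (p + q) :=
  (TensorProduct.assoc k A (T k A p) (T k A q)) ≪≫ₗ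
    TensorProduct.congr (LinearEquiv.refl k A) (splitT k A p q).symm

abbrev Cochain (n p : ℕ) : Type := T k A n →ₗ[k] Omega k A p

def IsDelta (P N : ℕ) (act : Omega k A P →ₗ[k] A →ₗ[k] Omega k A P)
    (F : Cochain k A N P) (D : Cochain k A (N + 1) P) : Prop :=
  ∀ v : ℕ → A,
    D (tp k A (N + 1) v) =
      sg ((N : ℤ) + P + 1) •
        (lmul k A P (v 0) (F (tp k A N (shiftT v)))
          + ∑ i ∈ Finset.range N, sg ((i : ℤ) + 1) • F (tp k A N (mulAt v i))
          + sg ((N : ℤ) + 1) • act (F (tp k A N v)) (v N))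

def thetaM (P N : ℕ) (F : Cochain k A N P) : Cochain k A (N + 1) (P + 1) :=
  (appOut k A P 1).toLinearMap ∘ₗ LinearMap.rTensor (T k A 1) F ∘ₗ (splitT k A N 1).toLinearMap

/-- The one-bar appending map `Ω^p → A → Ω^{p+1}`, `(x, a) ↦ x ⊗ s\bar a`,
characterized on generators. -/
def IsApp (p : ℕ) (app : Omega k A p →ₗ[k] A →ₗ[k] Omega k A (p + 1)) : Prop :=
  ∀ (a0 : A) (v : ℕ → A) (a : A), app (omk k A p a0 v) a = omk k A (p + 1) a0 (setAt v p a)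

def bar1 : T k A 1 ≃ₗ[k] Abar k A := PiTensorProduct.subsingletonEquiv (0 : Fin 1)

/-- `ḡ = (π ⊗ id^{⊗q}) ∘ g : (sĀ)^{⊗n} → (sĀ)^{⊗(q+1)}` for a cochain `g`. -/
def barify (n q : ℕ) (g : Cochain k A n q) : T k A n →ₗ[k] T k A (q + 1) :=
  (castT k A (Nat.add_comm 1 q)).toLinearMap
    ∘ₗ (splitT k A 1 q).symm.toLinearMap
    ∘ₗ (TensorProduct.congr (bar1 k A).symm (LinearEquiv.refl k (T k A q))).toLinearMap
    ∘ₗ LinearMap.rTensor (T k A q) (pr k A)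
    ∘ₗ g

/-- Apply `F` to the middle `b` factors of `(sĀ)^{⊗(a+b+c)}`. -/
def mapMid (a b c b' : ℕ) (F : T k A b →ₗ[k] T k A b') :
    T k A (a + b + c) →ₗ[k] T k A (a + b' + c) :=
  (splitT k A (a + b') c).symm.toLinearMap
    ∘ₗ LinearMap.rTensor (T k A c)
        ((splitT k A a b').symm.toLinearMap
          ∘ₗ LinearMap.lTensor (T k A a) F
          ∘ₗ (splitT k A a b).toLinearMap)
    ∘ₗ (splitT k A (a + b) c).toLinearMap

/-- The circle product `f ∘_{j+1} g` inserting `ḡ` into the `(j+1)`-st input of `f`. -/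
def circP (p q m n : ℕ) (f : Cochain k A m p) (g : Cochain k A n q) (j : ℕ) (hj : j < m) :
    Cochain k A (m + n - 1) (p + q) :=
  (appOut k A p q).toLinearMap
    ∘ₗ LinearMap.rTensor (T k A q) f
    ∘ₗ (splitT k A m q).toLinearMap
    ∘ₗ (castT k A (by omega : j + (q + 1) + (m - 1 - j) = m + q)).toLinearMap
    ∘ₗ mapMid k A j n (m - 1 - j) (q + 1) (barify k A n q g)
    ∘ₗ (castT k A (by omega : m + n - 1 = j + n + (m - 1 - j))).toLinearMap

/-- The circle product `f ∘_{-(j+1)} g` inserting `ḡ` into the `(j+1)`-st output slot of `f`. -/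
def circN (p q m n : ℕ) (f : Cochain k A m p) (g : Cochain k A n q) (j : ℕ) (hj : j < p)
    (hn : 0 < n) : Cochain k A (m + n - 1) (p + q) :=
  (castO k A (by omega : j + (q + 1) + (p - 1 - j) = p + q)).toLinearMap
    ∘ₗ LinearMap.lTensor A (mapMid k A j n (p - 1 - j) (q + 1) (barify k A n q g))
    ∘ₗ (castO k A (by omega : p + (n - 1) = j + n + (p - 1 - j))).toLinearMap
    ∘ₗ (appOut k A p (n - 1)).toLinearMap
    ∘ₗ LinearMap.rTensor (T k A (n - 1)) f
    ∘ₗ (splitT k A m (n - 1)).toLinearMap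
    ∘ₗ (castT k A (by omega : m + n - 1 = m + (n - 1))).toLinearMap

/-- The full circle product
`f ∘ g = Σ_{i=1}^m (-1)^{(n-q-1)(i-1)} f∘_i g - Σ_{i=1}^p (-1)^{(n-q-1)(i-m-p-1)} f∘_{-i} g`. -/
def circC (p q m n : ℕ) (f : Cochain k A m p) (g : Cochain k A n q) :
    Cochain k A (m + n - 1) (p + q) :=
  (∑ j ∈ (Finset.range m).attach,
      sg (((n : ℤ) - q - 1) * (j : ℕ)) •
        circP k A p q m n f g j (Finset.mem_range.mp j.2))
    - ∑ j ∈ (Finset.range p).attach,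
        if hn : 0 < n then
          sg (((n : ℤ) - q - 1) * (((j : ℕ) : ℤ) - m - p)) •
            circN k A p q m n f g j (Finset.mem_range.mp j.2) hn
        else 0

/-- The cup product
`f ∪ g = (μ ⊗ id^{⊗(p+q)})(id_A ⊗ f ⊗ id^{⊗q})(g ⊗ id^{⊗m})` on singular Hochschild cochains. -/
def cupM (p q m n : ℕ) (f : Cochain k A m p) (g : Cochain k A n q) :
    Cochain k A (n + m) (p + q) :=
  LinearMap.rTensor (T k A (p + q)) (LinearMap.mul' k A)
    ∘ₗ (TensorProduct.assoc k A A (T k A (p + q))).symm.toLinearMap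
    ∘ₗ LinearMap.lTensor A
        ((appOut k A p q).toLinearMap
          ∘ₗ LinearMap.rTensor (T k A q) f
          ∘ₗ (splitT k A m q).toLinearMap
          ∘ₗ (castT k A (Nat.add_comm q m)).toLinearMap
          ∘ₗ (splitT k A q m).symm.toLinearMap)
    ∘ₗ (TensorProduct.assoc k A (T k A q) (T k A m)).toLinearMap
    ∘ₗ LinearMap.rTensor (T k A m) g
    ∘ₗ (splitT k A n m).toLinearMap

/-- The submodule `A^∨ = Hom_{A⊗A^{op}}(A, A ⊗ A^{op}) ⊂ A ⊗ A` of Casimir-type elements: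
`Σ a x_i ⊗ y_i = Σ x_i ⊗ y_i a` for all `a`. -/
def Adual : Submodule k (A ⊗[k] A) :=
  ⨅ a : A,
    LinearMap.ker
      (LinearMap.rTensor A (LinearMap.mulLeft k a) - LinearMap.lTensor A (LinearMap.mulRight k a))

/-- Ambient model for Hochschild chains with coefficients in `A^∨`:
`C_p(A, A^∨) ⊂ (A ⊗ A) ⊗ (sĀ)^{⊗p}`. -/
abbrev Cdual (p : ℕ) : Type := (A ⊗[k] A) ⊗[k] T k A p

def dmk (p : ℕ) (x : A ⊗[k] A) (v : ℕ → A) : Cdual k A p := x ⊗ₜ tp k A p v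

/-- Value of the Hochschild boundary on a generator of `C_{p+1}(A, A^∨)`, using the bimodule
structure `a·(Σ x_i ⊗ y_i)·b = Σ x_i b ⊗ a y_i` of `A^∨`. -/
def bdualGen (p : ℕ) (x : A ⊗[k] A) (v : ℕ → A) : Cdual k A p :=
  dmk k A p (LinearMap.rTensor A (LinearMap.mulRight k (v 0)) x) (shiftT v)
    + ∑ j ∈ Finset.range p, sg ((j : ℤ) + 1) • dmk k A p x (mulAt v j)
    + sg ((p : ℤ) + 1) • dmk k A p (LinearMap.lTensor A (LinearMap.mulLeft k (v p)) x) v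

def IsBdual (p : ℕ) (f : Cdual k A (p + 1) →ₗ[k] Cdual k A p) : Prop :=
  ∀ (x : A ⊗[k] A) (v : ℕ → A), f (dmk k A (p + 1) x v) = bdualGen k A p x v

/-- The multiplication map `μ : C_0(A, A^∨) → A`, `Σ x_i ⊗ y_i ↦ Σ x_i y_i`. -/
def muD : Cdual k A 0 →ₗ[k] A :=
  LinearMap.mul' k A
    ∘ₗ (TensorProduct.rid k (A ⊗[k] A)).toLinearMap
    ∘ₗ LinearMap.lTensor (A ⊗[k] A) (PiTensorProduct.isEmptyEquiv (Fin 0)).toLinearMap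

/-- The embedding `ι : C_p(A, A^∨) → Ω_nc^{p+1}(A)`,
`(Σ x_j ⊗ y_j) ⊗ s\bar a_{1,p} ↦ Σ x_j ⊗ s\bar a_{1,p} ⊗ s\bar{y_j}`. -/
def iotaN (p : ℕ) : Cdual k A p →ₗ[k] Omega k A (p + 1) :=
  LinearMap.lTensor A
      ((splitT k A p 1).symm.toLinearMap
        ∘ₗ (TensorProduct.congr (LinearEquiv.refl k (T k A p)) (bar1 k A).symm).toLinearMap
        ∘ₗ LinearMap.lTensor (T k A p) (pr k A)
        ∘ₗ (TensorProduct.comm k A (T k A p)).toLinearMap)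
    ∘ₗ (TensorProduct.assoc k A A (T k A p)).toLinearMap

/-- Value of the Hochschild boundary on a generator of `C_{m+1}(A, A)`. -/
def bGen (m : ℕ) (a0 : A) (v : ℕ → A) : Omega k A m :=
  omk k A m (a0 * v 0) (shiftT v)
    + ∑ j ∈ Finset.range m, sg ((j : ℤ) + 1) • omk k A m a0 (mulAt v j)
    + sg ((m : ℤ) + 1) • omk k A m (v m * a0) v

def IsB (m : ℕ) (bmap : Omega k A (m + 1) →ₗ[k] Omega k A m) : Prop :=
  ∀ (a0 : A) (v : ℕ → A), bmap (omk k A (m + 1) a0 v) = bGen k A m a0 v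

/-- Value of the Connes `B` operator on a generator of `C_m(A, A)`:
`B(a₀ ⊗ s\bar a_{1,m}) = Σ_{i=1}^{m+1} (-1)^{mi} 1 ⊗ s\bar a_{i,m} ⊗ s\bar a₀ ⊗ s\bar a_{1,i-1}`. -/
def BGen (m : ℕ) (a0 : A) (v : ℕ → A) : Omega k A (m + 1) :=
  ∑ t ∈ Finset.range (m + 1),
    sg ((m : ℤ) * ((t : ℤ) + 1)) •
      omk k A (m + 1) 1
        (fun j => if j < m - t then v (t + j) else if j = m - t then a0 else v (j - (m - t) - 1))

def IsConnesB (m : ℕ) (Bm : Omega k A m →ₗ[k] Omega k A (m + 1)) : Prop :=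
  ∀ (a0 : A) (v : ℕ → A), Bm (omk k A m a0 v) = BGen k A m a0 v

/-- Hochschild cochains with coefficients in `A` itself. -/
abbrev CochA (n : ℕ) : Type := T k A n →ₗ[k] A

def IsDeltaA (N : ℕ) (F : CochA k A N) (D : CochA k A (N + 1)) : Prop :=
  ∀ v : ℕ → A,
    D (tp k A (N + 1) v) =
      sg ((N : ℤ) + 1) •
        (v 0 * F (tp k A N (shiftT v))
          + ∑ i ∈ Finset.range N, sg ((i : ℤ) + 1) • F (tp k A N (mulAt v i))
          + sg ((N : ℤ) + 1) • (F (tp k A N v) * v N))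

/-- The chain-chain star product on generators:
`α ⋆ β = Σ (x'_j x_i ⊗ y'_j) ⊗ s\bar a_{1,p} ⊗ s\bar{y_i} ⊗ s\bar b_{1,q}` for
`α = (Σ x_i ⊗ y_i) ⊗ s\bar a_{1,a}` and `β = (Σ x'_j ⊗ y'_j) ⊗ s\bar b_{1,b}`. -/
def IsSt (a b c : ℕ) (st : Cdual k A a →ₗ[k] Cdual k A b →ₗ[k] Cdual k A c) : Prop :=
  ∀ (x0 x1 : A) (v : ℕ → A) (y0 y1 : A) (w : ℕ → A),
    st (dmk k A a (x0 ⊗ₜ x1) v) (dmk k A b (y0 ⊗ₜ y1) w) =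
      dmk k A c ((y0 * x0) ⊗ₜ y1) (catAt a v x1 w)

/-- The homotopy `β • α` on generators (`β` of chain degree `a`, `α` of chain degree `b`). -/
def IsBul (a b c : ℕ) (bul : Cdual k A a →ₗ[k] Cdual k A b →ₗ[k] Cdual k A c) : Prop :=
  ∀ (y0 y1 : A) (w : ℕ → A) (x0 x1 : A) (v : ℕ → A),
    bul (dmk k A a (y0 ⊗ₜ y1) w) (dmk k A b (x0 ⊗ₜ x1) v) =
      ∑ t ∈ Finset.range (b + 1),
        sg ((a : ℤ) * ((t : ℤ) + 1)) •
          dmk k A c (x0 ⊗ₜ x1)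
            (fun j =>
              if j < t then v j
              else if j = t then y0
              else if j < t + 1 + a then w (j - t - 1)
              else if j = t + 1 + a then y1
              else v (j - a - 2))

/-- The `A^∨`-coefficient part of `C_p(A, A^∨)` inside the ambient `(A ⊗ A) ⊗ (sĀ)^{⊗p}`. -/
def AdualChains (p : ℕ) : Submodule k (Cdual k A p) :=
  LinearMap.range (LinearMap.rTensor (T k A p) (Adual k A).subtype)

/-- `conv (Σ x_i ⊗ y_i) = Σ ⟨y_i, 1⟩ x_i`, the inverse of `A ≅ A^∨` for a symmetric algebra
with bilinear form `br`. -/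
def conv (br : A →ₗ[k] A →ₗ[k] k) : A ⊗[k] A →ₗ[k] A :=
  (TensorProduct.rid k A).toLinearMap ∘ₗ
    LinearMap.lTensor A
      ((LinearMap.ringLmapEquivSelf k k k).symm 1 ∘ₗ (br.flip 1))

end

end TateHochschild
namespace TateHochschild

noncomputable section Aux

variable (k A : Type) [Field k] [Ring A] [Algebra k A]

variable {k A}

theorem tp_congr {n : ℕ} {v w : ℕ → A} (h : ∀ j < n, v j = w j) :
    tp k A n v = tp k A n w := by
  unfold tp
  congr 1
  funext i
  rw [h i i.2]

theorem ext_tp {n : ℕ} {M : Type} [AddCommGroup M] [Module k M] {F G : T k A n →ₗ[k] M}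
    (h : ∀ v : ℕ → A, F (tp k A n v) = G (tp k A n v)) : F = G := by
  apply LinearMap.ext; intro x
  induction x using PiTensorProduct.induction_on' with
  | tprodCoeff r f =>
    have : ∀ i : Fin n, ∃ a : A, pr k A a = f i := fun i =>
      Submodule.Quotient.mk_surjective _ (f i)
    choose g hg using this
    have hf : (⨂ₜ[k] i, f i) = tp k A n (fun j => if hj : j < n then g ⟨j, hj⟩ else 1) := by
      unfold tp
      congr 1
      funext i
      simp only [dif_pos i.2]
      rw [Fin.eta, hg]
    rw [PiTensorProduct.tprodCoeff_eq_smul_tprod, map_smul, map_smul, hf, h]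
  | add x y hx hy => rw [map_add, map_add, hx, hy]

theorem ext_omk {n : ℕ} {M : Type} [AddCommGroup M] [Module k M] {F G : Omega k A n →ₗ[k] M}
    (h : ∀ (a0 : A) (v : ℕ → A), F (omk k A n a0 v) = G (omk k A n a0 v)) : F = G := by
  apply TensorProduct.ext'
  intro a0 x
  exact LinearMap.congr_fun
    (ext_tp (F := F ∘ₗ TensorProduct.mk k A (T k A n) a0)
      (G := G ∘ₗ TensorProduct.mk k A (T k A n) a0) (fun v => h a0 v)) x

theorem splitT_tp (a b : ℕ) (v : ℕ → A) :
    splitT k A a b (tp k A (a + b) v) = tp k A a v ⊗ₜ tp k A b (fun j => v (a + j)) := by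
  unfold splitT tp
  simp only [LinearEquiv.trans_apply, PiTensorProduct.reindex_tprod,
    PiTensorProduct.tmulEquiv_symm_apply, Equiv.symm_symm]
  congr 1

theorem splitT_symm_tp (a b : ℕ) (v w : ℕ → A) :
    (splitT k A a b).symm (tp k A a v ⊗ₜ tp k A b w) =
      tp k A (a + b) (fun j => if j < a then v j else w (j - a)) := by
  rw [LinearEquiv.symm_apply_eq, splitT_tp]
  congr 1
  · exact tp_congr fun j hj => by simp [hj]
  · exact tp_congr fun j hj => by simp

theorem appOut_tmul (p q : ℕ) (a0 : A) (v w : ℕ → A) :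
    appOut k A p q (omk k A p a0 v ⊗ₜ tp k A q w) =
      omk k A (p + q) a0 (fun j => if j < p then v j else w (j - p)) := by
  unfold appOut omk
  simp only [LinearEquiv.trans_apply, TensorProduct.assoc_tmul, TensorProduct.congr_tmul,
    LinearEquiv.refl_apply, splitT_symm_tp]

def appL (p : ℕ) (a : A) : Omega k A p →ₗ[k] Omega k A (p + 1) :=
  (appOut k A p 1).toLinearMap ∘ₗ
    (TensorProduct.mk k (Omega k A p) (T k A 1)).flip (tp k A 1 fun _ => a)

theorem appL_apply (p : ℕ) (a : A) (x : Omega k A p) :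
    appL p a x = appOut k A p 1 (x ⊗ₜ tp k A 1 fun _ => a) := rfl

theorem appL_omk (p : ℕ) (a : A) (a0 : A) (v : ℕ → A) :
    appL p a (omk k A p a0 v) = omk k A (p + 1) a0 (setAt v p a) := by
  rw [appL_apply, appOut_tmul]
  unfold omk
  congr 1
  exact tp_congr fun j hj => by
    rcases Nat.lt_succ_iff_lt_or_eq.mp hj with h | h
    · simp [h, setAt, Nat.ne_of_lt h]
    · simp [h, setAt]

theorem lmul_omk (p : ℕ) (a a0 : A) (v : ℕ → A) :
    lmul k A p a (omk k A p a0 v) = omk k A p (a * a0) v := by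
  unfold lmul omk
  simp

theorem thetaM_tp (P n : ℕ) (f : Cochain k A n P) (v : ℕ → A) :
    thetaM k A P n f (tp k A (n + 1) v) = appL P (v n) (f (tp k A n v)) := by
  unfold thetaM
  simp only [LinearMap.coe_comp, Function.comp_apply, LinearEquiv.coe_coe, splitT_tp,
    LinearMap.rTensor_tmul, appL_apply]
  congr 2
  exact tp_congr fun j hj => by interval_cases j; rfl

theorem lmul_appL (p : ℕ) (a b : A) :
    lmul k A (p + 1) b ∘ₗ appL p a = appL p a ∘ₗ lmul k A p b := by
  apply ext_omk
  intro a0 v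
  simp [lmul_omk, appL_omk]

theorem sg_even {z : ℤ} (h : Even z) : sg z = 1 := if_pos h
theorem sg_odd {z : ℤ} (h : ¬ Even z) : sg z = -1 := if_neg h

theorem sg_add_one (z : ℤ) : sg (z + 1) = - sg z := by
  rcases Int.even_or_odd z with h | h
  · have h1 : ¬ Even (z + 1) := by simp [Int.even_add_one, h]
    rw [sg_odd h1, sg_even h]
  · have h0 : ¬ Even z := Int.not_even_iff_odd.mpr h
    have h1 : Even (z + 1) := by simp [Int.even_add_one, h0, h]
    rw [sg_even h1, sg_odd h0, neg_neg]

theorem sg_neg (y z : ℤ) (h : y = z + 1) : sg y = - sg z := h ▸ sg_add_one z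

theorem sg_eq (y z : ℤ) (h : y = z + 2) : sg y = sg z := by
  rw [h, show z + 2 = (z + 1) + 1 by ring, sg_add_one, sg_add_one, neg_neg]

theorem omk_congr {n : ℕ} (a0 : A) {v w : ℕ → A} (h : ∀ j < n, v j = w j) :
    omk k A n a0 v = omk k A n a0 w := by unfold omk; rw [tp_congr h]

theorem act_appL (p : ℕ) (actp : Omega k A p →ₗ[k] A →ₗ[k] Omega k A p)
    (hactp : IsRAct k A p actp)
    (actp1 : Omega k A (p + 1) →ₗ[k] A →ₗ[k] Omega k A (p + 1))
    (hactp1 : IsRAct k A (p + 1) actp1) (a b : A) (x : Omega k A p) :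
    appL p b (actp x a) = appL p (a * b) x - actp1 (appL p a x) b := by
  have : appL (k := k) (A := A) p b ∘ₗ actp.flip a =
      appL p (a * b) - actp1.flip b ∘ₗ appL p a := by
    apply ext_omk
    intro a0 v
    simp only [LinearMap.comp_apply, LinearMap.flip_apply, LinearMap.sub_apply]
    rw [hactp a0 v a, appL_omk p a a0 v, hactp1 a0 (setAt v p a) b, appL_omk p (a * b) a0 v]
    unfold rGen
    rw [Finset.sum_range_succ]
    rw [map_add, map_zsmul, map_sum, appL_omk]
    simp only [map_zsmul, appL_omk]
    have e1 : setAt (setAt v p a) (p + 1) b 0 = setAt v p a 0 := by simp [setAt]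
    have e2 : shiftT (setAt (setAt v p a) (p + 1) b) = setAt (shiftT (setAt v p a)) p b := by
      funext j
      by_cases hj : j = p <;> simp [shiftT, setAt, hj]
    have e3 : ∀ i < p, omk k A (p + 1) a0 (mulAt (setAt (setAt v p a) (p + 1) b) i) =
        omk k A (p + 1) a0 (setAt (mulAt (setAt v p a) i) p b) := by
      intro i hi
      apply omk_congr
      intro j hj
      rcases Nat.lt_succ_iff_lt_or_eq.mp hj with h | h
      · have hjp : j ≠ p := by omega
        by_cases h1 : j < i
        · have hx : j ≠ p + 1 := by omega
          simp [mulAt, setAt, h1, hjp, hx]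
        · by_cases h2 : j = i
          · subst h2
            have hx1 : j + 1 ≠ p + 1 := by omega
            have hx0 : j ≠ p + 1 := by omega
            simp [mulAt, setAt, h1, hjp, hx1, hx0]
          · have hx : j + 1 ≠ p + 1 := by omega
            simp [mulAt, setAt, h1, h2, hjp, hx]
      · have h1 : ¬ (p < i) := by omega
        have h2 : p ≠ i := by omega
        simp [mulAt, setAt, h, h1, h2]
    have e4 : omk k A (p + 1) a0 (mulAt (setAt (setAt v p a) (p + 1) b) p) =
        omk k A (p + 1) a0 (setAt v p (a * b)) := by
      apply omk_congr
      intro j hj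
      rcases Nat.lt_succ_iff_lt_or_eq.mp hj with h | h
      · have h2 : j ≠ p := Nat.ne_of_lt h
        have hx : j ≠ p + 1 := by omega
        simp [mulAt, setAt, h, h2, hx]
      · simp [mulAt, setAt, h]
    have hsum : ∑ x ∈ Finset.range p,
          sg ((↑(p + 1) : ℤ) + ↑x + 1) • omk k A (p + 1) a0
            (mulAt (setAt (setAt v p a) (p + 1) b) x) =
        ∑ x ∈ Finset.range p,
          -(sg ((↑p : ℤ) + ↑x + 1) • omk k A (p + 1) a0
            (setAt (mulAt (setAt v p a) x) p b)) := by
      refine Finset.sum_congr rfl fun i hi => ?_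
      rw [e3 i (Finset.mem_range.mp hi),
        sg_neg ((↑(p + 1) : ℤ) + ↑i + 1) ((↑p : ℤ) + ↑i + 1) (by push_cast; ring), neg_smul]
    rw [e1, e2, e4, hsum]
    rw [sg_even (z := (↑(p + 1) : ℤ) + ↑p + 1) (by push_cast; exact ⟨(p : ℤ) + 1, by ring⟩)]
    rw [sg_neg ((↑(p + 1) : ℤ)) (↑p) (by push_cast; ring)]
    rw [neg_smul, one_smul, Finset.sum_neg_distrib]
    abel
  simpa using LinearMap.congr_fun this x

theorem main_aux (p N : ℕ)
    (actp : Omega k A p →ₗ[k] A →ₗ[k] Omega k A p) (hactp : IsRAct k A p actp)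
    (actp1 : Omega k A (p + 1) →ₗ[k] A →ₗ[k] Omega k A (p + 1))
    (hactp1 : IsRAct k A (p + 1) actp1)
    (f : Cochain k A N p)
    (D : Cochain k A (N + 1) p) (hD : IsDelta k A p N actp f D)
    (Dθ : Cochain k A (N + 2) (p + 1))
    (hDθ : IsDelta k A (p + 1) (N + 1) actp1 (thetaM k A p N f) Dθ) :
    thetaM k A p (N + 1) D = Dθ := by
  apply ext_tp
  intro v
  have hL : (thetaM k A p (N + 1) D) (tp k A (N + 2) v)
      = appL p (v (N + 1)) (D (tp k A (N + 1) v)) := thetaM_tp p (N + 1) D v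
  rw [hL, hD v, hDθ v]
  -- expand theta applications on the right
  have t0 : thetaM k A p N f (tp k A (N + 1) (shiftT v))
      = appL p (v (N + 1)) (f (tp k A N (shiftT v))) := thetaM_tp p N f (shiftT v)
  have t3 : thetaM k A p N f (tp k A (N + 1) v)
      = appL p (v N) (f (tp k A N v)) := thetaM_tp p N f v
  have t2 : thetaM k A p N f (tp k A (N + 1) (mulAt v N))
      = appL p (v N * v (N + 1)) (f (tp k A N v)) := by
    rw [thetaM_tp]
    have h1 : mulAt v N N = v N * v (N + 1) := by simp [mulAt]
    have h2 : tp k A N (mulAt v N) = tp k A N v :=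
      tp_congr fun j hj => by simp [mulAt, hj, Nat.ne_of_lt hj]
    rw [h1, h2]
  have t1 : ∀ i < N, thetaM k A p N f (tp k A (N + 1) (mulAt v i))
      = appL p (v (N + 1)) (f (tp k A N (mulAt v i))) := by
    intro i hi
    rw [thetaM_tp]
    have h1 : mulAt v i N = v (N + 1) := by
      simp [mulAt, show ¬ N < i by omega, show N ≠ i by omega]
    rw [h1]
  rw [t0, t3, Finset.sum_range_succ, t2]
  have hsum : ∑ i ∈ Finset.range N,
        sg ((i : ℤ) + 1) • thetaM k A p N f (tp k A (N + 1) (mulAt v i)) =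
      ∑ i ∈ Finset.range N,
        sg ((i : ℤ) + 1) • appL p (v (N + 1)) (f (tp k A N (mulAt v i))) :=
    Finset.sum_congr rfl fun i hi => by rw [t1 i (Finset.mem_range.mp hi)]
  rw [hsum]
  -- expand the left side
  simp only [map_zsmul, map_add, map_sum]
  have hlm : appL p (v (N + 1)) (lmul k A p (v 0) (f (tp k A N (shiftT v))))
      = lmul k A (p + 1) (v 0) (appL p (v (N + 1)) (f (tp k A N (shiftT v)))) :=
    (LinearMap.congr_fun (lmul_appL p (v (N + 1)) (v 0)) _).symm
  rw [hlm, act_appL p actp hactp actp1 hactp1 (v N) (v (N + 1)) (f (tp k A N v))]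
  -- signs
  rw [sg_eq ((↑(N + 1) : ℤ) + ↑(p + 1) + 1) ((↑N : ℤ) + ↑p + 1) (by push_cast; ring)]
  rw [sg_neg ((↑(N + 1) : ℤ) + 1) ((↑N : ℤ) + 1) (by push_cast; ring)]
  congr 1
  simp only [smul_sub, neg_smul]
  abel

end Aux

end TateHochschild

namespace TateHochschild

/-- Lemma 3.1 of the paper.  The stabilization maps
`θ_p : C^*(A, Ω_nc^p(A)) → C^*(A, Ω_nc^{p+1}(A))`, `f ↦ f ⊗ id_{sĀ}`, commute with the
Hochschild differential: `θ_p ∘ δ = δ ∘ θ_p`. -/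
theorem theta_commutes_with_delta
    (k A : Type) [Field k] [Ring A] [Algebra k A] (p N : ℕ)
    (actp : Omega k A p →ₗ[k] A →ₗ[k] Omega k A p) (hactp : IsRAct k A p actp)
    (actp1 : Omega k A (p + 1) →ₗ[k] A →ₗ[k] Omega k A (p + 1))
    (hactp1 : IsRAct k A (p + 1) actp1)
    (f : Cochain k A N p)
    (D : Cochain k A (N + 1) p) (hD : IsDelta k A p N actp f D)
    (Dθ : Cochain k A (N + 2) (p + 1))
    (hDθ : IsDelta k A (p + 1) (N + 1) actp1 (thetaM k A p N f) Dθ) :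
    thetaM k A p (N + 1) D = Dθ := by
  exact main_aux p N actp hactp actp1 hactp1 f D hD Dθ hDθ

end TateHochschild
end

section
/- For a finite-dimensional symmetric k-algebra A with nondegenerate pairing ⟨·,·⟩, the pairing on the generalized Tate-Hochschild complex D^*(A,A) is compatible with the differential: ⟨∂(x), y⟩ = (-1)^{|x|-1} ⟨x, ∂(y)⟩ for all homogeneous x, y ∈ D^*(A,A). -/
open TensorProduct PiTensorProduct

namespace TateHochschild

/-- The graded pairing `⟨f, a₀ ⊗ s\bar a_{1,m}⟩ = ⟨f(s\bar a_{1,m}), a₀⟩` between `C^m(A,A)`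
and `C_m(A,A)`, characterized on generators. -/
def IsPair (k A : Type) [Field k] [Ring A] [Algebra k A] (m : ℕ)
    (br : A →ₗ[k] A →ₗ[k] k) (F : CochA k A m) (P : Omega k A m →ₗ[k] k) : Prop :=
  ∀ (a0 : A) (v : ℕ → A), P (omk k A m a0 v) = br (F (tp k A m v)) a0

/-- Every element of `T k A n` in the image of `tprod` comes from a tuple of algebra
elements, since `pr` is surjective. -/
lemma exists_tp {k A : Type} [Field k] [Ring A] [Algebra k A] (n : ℕ)
    (x : Fin n → Abar k A) : ∃ v : ℕ → A, tp k A n v = tprod k x := by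
  choose g hg using fun i => Submodule.mkQ_surjective
    (Submodule.span k ({(1 : A)} : Set A)) (x i)
  refine ⟨fun j => if h : j < n then g ⟨j, h⟩ else 0, ?_⟩
  unfold tp
  congr 1
  funext i
  simp only [i.isLt, dif_pos, Fin.eta, pr]
  exact hg i

/-- Two linear maps on `Omega k A n` agreeing on generators `omk` are equal. -/
lemma ext_omega {k A : Type} [Field k] [Ring A] [Algebra k A] {n : ℕ}
    (P Q : Omega k A n →ₗ[k] k)
    (h : ∀ (a0 : A) (v : ℕ → A), P (omk k A n a0 v) = Q (omk k A n a0 v)) : P = Q := by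
  apply TensorProduct.ext'
  intro a t
  induction t using PiTensorProduct.induction_on with
  | smul_tprod r x =>
      obtain ⟨v, hv⟩ := exists_tp n x
      rw [← hv, TensorProduct.tmul_smul, map_smul, map_smul]
      exact congrArg _ (h a v)
  | add x y hx hy => rw [TensorProduct.tmul_add, map_add, map_add, hx, hy]

/-- Lemma 6.11(i) of the paper.  For a finite-dimensional symmetric
`k`-algebra `A`, the pairing on the generalized Tate–Hochschild complex `𝒟^*(A,A)` is
compatible with the differential: `⟨∂x, y⟩ = (-1)^{|x|-1} ⟨x, ∂y⟩` for homogeneous `x, y`.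
The nontrivial cases are: (a) `x` a cochain of degree `m` and `y ∈ C_{m+1}(A,A)`, where
`∂x = δx` and `∂y = b(y)`; and (b) the middle degrees, where `∂` is
`τ(x) = Σ_λ e_λ x e^λ` and the identity reads `⟨τ(a), c⟩ = ⟨a, τ(c)⟩`. -/
theorem tate_complex_pairing_compatible_with_differential
    (k A : Type) [Field k] [Ring A] [Algebra k A] [FiniteDimensional k A]
    (br : A →ₗ[k] A →ₗ[k] k)
    (hassoc : ∀ a b c : A, br (a * b) c = br a (b * c))
    (hsymm : ∀ a b : A, br a b = br b a)
    (hnondeg : ∀ a : A, (∀ b : A, br a b = 0) → a = 0)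
    (ι : Type) [Fintype ι] [DecidableEq ι] (e : Module.Basis ι k A) (E : ι → A)
    (hdual : ∀ i j : ι, br (e i) (E j) = if i = j then 1 else 0) :
    -- (a) cochain–chain compatibility
    (∀ (m : ℕ) (F : CochA k A m) (D : CochA k A (m + 1)), IsDeltaA k A m F D →
      ∀ bm : Omega k A (m + 1) →ₗ[k] Omega k A m, IsB k A m bm →
      ∀ P1 : Omega k A (m + 1) →ₗ[k] k, IsPair k A (m + 1) br D P1 →
      ∀ P2 : Omega k A m →ₗ[k] k, IsPair k A m br F P2 →
      ∀ c : Omega k A (m + 1), P1 c = sg ((m : ℤ) + 1) • P2 (bm c)) ∧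
    -- (b) compatibility across the middle differential `τ(x) = Σ_λ e_λ x e^λ`
    (∀ a c : A, br (∑ i : ι, e i * a * E i) c = br a (∑ i : ι, e i * c * E i)) := by
  constructor
  · -- (a) cochain–chain compatibility
    intro m F D hD bm hB P1 hP1 P2 hP2 c
    have key : P1 = sg ((m : ℤ) + 1) • (P2 ∘ₗ bm) := by
      apply ext_omega
      intro a0 v
      rw [hP1 a0 v, hD v, LinearMap.smul_apply, LinearMap.comp_apply, hB a0 v]
      unfold bGen
      simp only [map_add, map_sum, map_zsmul, LinearMap.add_apply, LinearMap.sum_apply,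
        LinearMap.smul_apply]
      have hP2' : ∀ (b0 : A) (w : ℕ → A),
          P2 (omk k A m b0 w) = br (F (tp k A m w)) b0 := hP2
      simp only [hP2']
      have h1 : br (v 0 * F (tp k A m (shiftT v))) a0
          = br (F (tp k A m (shiftT v))) (a0 * v 0) := by
        rw [hsymm, ← hassoc, hsymm]
      have h3 : br (F (tp k A m v) * v m) a0 = br (F (tp k A m v)) (v m * a0) :=
        hassoc _ _ _
      rw [h1, h3]
    rw [key, LinearMap.smul_apply, LinearMap.comp_apply]
  · -- (b) self-adjointness of τ
    have hexp : ∀ x : A, x = ∑ j : ι, br x (E j) • e j := by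
      have hL : (∑ j : ι, LinearMap.toSpanSingleton k A (e j) ∘ₗ (br.flip (E j)))
          = (LinearMap.id : A →ₗ[k] A) := by
        apply Module.Basis.ext e
        intro i
        simp only [LinearMap.sum_apply, LinearMap.comp_apply, LinearMap.flip_apply,
          LinearMap.toSpanSingleton_apply, LinearMap.id_apply, hdual]
        simp [ite_smul]
      intro x
      have := LinearMap.congr_fun hL x
      simp only [LinearMap.sum_apply, LinearMap.comp_apply, LinearMap.flip_apply,
        LinearMap.toSpanSingleton_apply, LinearMap.id_apply] at this
      exact this.symm
    intro a c
    have hcyc : ∀ x y z : A, br (x * y) z = br y (z * x) := fun x y z => by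
      rw [hassoc, hsymm, hassoc]
    rw [map_sum, LinearMap.sum_apply, map_sum]
    have lhs_i : ∀ i : ι, br (e i * a * E i) c = br a (E i * (c * e i)) := by
      intro i
      rw [mul_assoc, hcyc, hassoc]
    calc ∑ i : ι, br (e i * a * E i) c
        = ∑ i : ι, ∑ j : ι, br (E i) (E j) • br a (e j * (c * e i)) := by
          refine Finset.sum_congr rfl fun i _ => ?_
          rw [lhs_i i]
          conv_lhs => rw [hexp (E i)]
          rw [Finset.sum_mul, map_sum (br a)]
          refine Finset.sum_congr rfl fun j _ => ?_
          rw [smul_mul_assoc, map_smul]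
      _ = ∑ i : ι, br a (e i * c * E i) := by
          rw [Finset.sum_comm]
          refine Finset.sum_congr rfl fun i _ => ?_
          conv_rhs => rw [hexp (E i)]
          rw [Finset.mul_sum, map_sum (br a)]
          refine Finset.sum_congr rfl fun j _ => ?_
          rw [mul_smul_comm, map_smul, hsymm (E i) (E j), mul_assoc]


end TateHochschild
end
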